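/- For a weighted graph game on a tree (or forest), there exists a partition of the vertices into at most two sets such that every edge with positive weight has both endpoints in the same set and every edge with negative weight has its endpoints in different sets. Consequently the optimal coalition structure value equals the sum of all positive edge weights. -/

import Mathlib

open scoped Classical
open Finset

/-- Value of a coalition structure (labelling `p`) in a weighted graph game. -/
noncomputable def gval {V : Type} [Fintype V] {α : Type} (G : SimpleGraph V)
    (w : Sym2 V → ℚ) (p : V → α) : ℚ :=
  ∑ e : Sym2 V, if e ∈ G.edgeSet ∧ (Sym2.map p e).IsDiag then w e else 0

/-- Sum of the weights of all positively-weighted edges of `G`. -/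
noncomputable def posSum {V : Type} [Fintype V] (G : SimpleGraph V)
    (w : Sym2 V → ℚ) : ℚ :=
  ∑ e : Sym2 V, if e ∈ G.edgeSet ∧ 0 < w e then w e else 0

lemma acyclic_anti {V : Type} {G G' : SimpleGraph V} (h : G' ≤ G) (hG : G.IsAcyclic) :
    G'.IsAcyclic := fun _ c hc => hG (c.mapLe h) (hc.mapLe h)

lemma exists_coloring {V : Type} [Fintype V] (n : ℕ) :
    ∀ (G : SimpleGraph V), G.IsAcyclic → G.edgeFinset.card = n → ∀ (w : Sym2 V → ℚ),
    ∃ p : V → Bool, ∀ u v : V, G.Adj u v → ((p u ≠ p v) ↔ w s(u, v) < 0) := by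
  induction n using Nat.strong_induction_on with
  | _ n ih =>
    intro G hG hcard w
    rcases Nat.eq_zero_or_pos n with h0 | hpos
    · refine ⟨fun _ => true, fun u v huv => ?_⟩
      exfalso
      have hm : s(u, v) ∈ G.edgeFinset := SimpleGraph.mem_edgeFinset.mpr huv
      have hemp : G.edgeFinset = ∅ := Finset.card_eq_zero.mp (by rw [hcard, h0])
      rw [hemp] at hm
      exact absurd hm (Finset.notMem_empty _)
    · have hne : G.edgeFinset.Nonempty := by
        rw [← Finset.card_pos, hcard]; exact hpos
      obtain ⟨e, he⟩ := hne
      induction e with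
      | _ a b =>
        have hab : G.Adj a b := by
          rw [SimpleGraph.mem_edgeFinset, SimpleGraph.mem_edgeSet] at he; exact he
        set G' : SimpleGraph V := G.deleteEdges {s(a, b)} with hG'def
        have hle : G' ≤ G := SimpleGraph.deleteEdges_le _
        have hG' : G'.IsAcyclic := acyclic_anti hle hG
        have hcard' : G'.edgeFinset.card < n := by
          rw [← hcard]
          apply Finset.card_lt_card
          constructor
          · intro x hx
            rw [SimpleGraph.mem_edgeFinset] at hx ⊢
            exact SimpleGraph.edgeSet_mono hle hx
          · intro hsub
            have := hsub (SimpleGraph.mem_edgeFinset.mpr (by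
              rw [SimpleGraph.mem_edgeSet]; exact hab : s(a,b) ∈ G.edgeSet))
            rw [SimpleGraph.mem_edgeFinset, SimpleGraph.mem_edgeSet,
              SimpleGraph.deleteEdges_adj] at this
            exact this.2 rfl
        obtain ⟨p', hp'⟩ := ih _ hcard' G' hG' (by convert rfl) w
        have hbridge : ¬ (G \ SimpleGraph.fromEdgeSet {s(a, b)}).Reachable a b :=
          ((SimpleGraph.isAcyclic_iff_forall_adj_isBridge.mp hG) hab)
        have hreach : ¬ G'.Reachable b a := fun h => hbridge h.symm
        refine ⟨fun v => if G'.Reachable b v then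
          (((p' a != p' b) != decide (w s(a, b) < 0)) != p' v) else p' v, ?_⟩
        intro u v huv
        dsimp only
        by_cases hcase : s(u, v) = s(a, b)
        · rw [Sym2.eq_iff] at hcase
          rcases hcase with ⟨h1, h2⟩ | ⟨h1, h2⟩
          · rw [h1, h2, if_neg hreach, if_pos (SimpleGraph.Reachable.refl b)]
            by_cases hw : w s(a, b) < 0
            · have hd : decide (w s(a, b) < 0) = true := by simp [hw]
              rw [hd]
              cases h4 : p' a <;> cases h5 : p' b <;> simp [hw]
            · have hd : decide (w s(a, b) < 0) = false := by simp [hw]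
              rw [hd]
              cases h4 : p' a <;> cases h5 : p' b <;> simp [hw]
          · rw [h1, h2, if_neg hreach, if_pos (SimpleGraph.Reachable.refl b),
              Sym2.eq_swap (a := b) (b := a)]
            by_cases hw : w s(a, b) < 0
            · have hd : decide (w s(a, b) < 0) = true := by simp [hw]
              rw [hd]
              cases h4 : p' a <;> cases h5 : p' b <;> simp [hw]
            · have hd : decide (w s(a, b) < 0) = false := by simp [hw]
              rw [hd]
              cases h4 : p' a <;> cases h5 : p' b <;> simp [hw]
        · have huv' : G'.Adj u v := SimpleGraph.deleteEdges_adj.mpr ⟨huv, by simpa using hcase⟩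
          have hriff : G'.Reachable b u ↔ G'.Reachable b v :=
            ⟨fun h => h.trans huv'.reachable, fun h => h.trans huv'.symm.reachable⟩
          rw [← hp' u v huv']
          by_cases hr : G'.Reachable b u
          · rw [if_pos hr, if_pos (hriff.mp hr)]
            cases hC : ((p' a != p' b) != decide (w s(a, b) < 0)) <;>
              cases h4 : p' u <;> cases h5 : p' v <;> simp
          · rw [if_neg hr, if_neg (fun h => hr (hriff.mpr h))]


lemma gval_le_posSum {V : Type} [Fintype V] {α : Type} (G : SimpleGraph V)
    (w : Sym2 V → ℚ) (q : V → α) : gval G w q ≤ posSum G w := by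
  unfold gval posSum
  apply Finset.sum_le_sum
  intro e _
  by_cases h1 : e ∈ G.edgeSet ∧ (Sym2.map q e).IsDiag
  · rw [if_pos h1]
    by_cases h2 : 0 < w e
    · rw [if_pos ⟨h1.1, h2⟩]
    · rw [if_neg fun h => h2 h.2]
      exact le_of_not_gt h2
  · rw [if_neg h1]
    by_cases h2 : e ∈ G.edgeSet ∧ 0 < w e
    · rw [if_pos h2]; exact le_of_lt h2.2
    · rw [if_neg h2]

theorem forest_optimal_structure {V : Type} [Fintype V]
    (G : SimpleGraph V) (hG : G.IsAcyclic) (w : Sym2 V → ℚ) :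
    ∃ p : V → Bool,
      (∀ u v : V, G.Adj u v → 0 < w s(u, v) → p u = p v) ∧
      (∀ u v : V, G.Adj u v → w s(u, v) < 0 → p u ≠ p v) ∧
      gval G w p = posSum G w ∧
      ∀ (α : Type) (q : V → α), gval G w q ≤ gval G w p := by
  obtain ⟨p, hp⟩ := exists_coloring G.edgeFinset.card G hG rfl w
  have h1 : ∀ u v : V, G.Adj u v → 0 < w s(u, v) → p u = p v := fun u v huv hw =>
    not_not.mp fun h => absurd ((hp u v huv).mp h) (not_lt.mpr (le_of_lt hw))
  have h2 : ∀ u v : V, G.Adj u v → w s(u, v) < 0 → p u ≠ p v := fun u v huv hw =>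
    (hp u v huv).mpr hw
  have heq : gval G w p = posSum G w := by
    unfold gval posSum
    apply Finset.sum_congr rfl
    intro e _
    induction e with
    | _ x y =>
      by_cases hadj : G.Adj x y
      · have hmem : s(x, y) ∈ G.edgeSet := (G.mem_edgeSet).mpr hadj
        have hdiag : (Sym2.map p s(x, y)).IsDiag ↔ p x = p y := by
          rw [Sym2.map_pair_eq, Sym2.mk_isDiag_iff]
        rcases lt_trichotomy (w s(x, y)) 0 with hw | hw | hw
        · rw [if_neg, if_neg]
          · exact fun h => absurd h.2 (not_lt.mpr (le_of_lt hw))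
          · exact fun h => absurd (hdiag.mp h.2) (h2 x y hadj hw)
        · rw [if_pos ⟨hmem, hdiag.mpr (not_not.mp fun h =>
            absurd ((hp x y hadj).mp h) (by rw [hw]; exact lt_irrefl 0))⟩,
            if_neg fun h => absurd h.2 (by rw [hw]; exact lt_irrefl 0), hw]
        · rw [if_pos ⟨hmem, hdiag.mpr (h1 x y hadj hw)⟩, if_pos ⟨hmem, hw⟩]
      · have hmem : s(x, y) ∉ G.edgeSet := fun h => hadj ((G.mem_edgeSet).mp h)
        rw [if_neg fun h => hmem h.1, if_neg fun h => hmem h.1]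
  exact ⟨p, h1, h2, heq, fun α q => heq ▸ gval_le_posSum G w q⟩
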